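/- For M, H > 0 there exists a unique q_* > 0 satisfying q_* = M √(G(q_*,q_*)/H), where G(q,q) = I_1(q)K_1(q); moreover along any evolution conserving H = (p² + M²/q²)G(q,q), one has q(t) ≥ q_* for all t. -/

import Mathlib

open Real Filter Set

/-- Modified Bessel function of the first kind, order 1 (power series). -/
noncomputable def besselI1 (x : ℝ) : ℝ :=
  ∑' k : ℕ, (x / 2) ^ (2 * k + 1) / ((Nat.factorial k : ℝ) * (Nat.factorial (k + 1) : ℝ))

/-- Modified Bessel function of the second kind, order 1 (integral representation). -/
noncomputable def besselK1 (x : ℝ) : ℝ :=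
  ∫ t in Set.Ioi (0 : ℝ), Real.exp (-x * Real.cosh t) * Real.cosh t

/-- Diagonal Green's function `G(q) = I₁(q) K₁(q)`. -/
noncomputable def Gdiag (q : ℝ) : ℝ := besselI1 q * besselK1 q

/-- Green's function of the radial Helmholtz operator:
`G(r,ξ) = I₁(min(r,ξ)) K₁(max(r,ξ))`. -/
noncomputable def Grad (r ξ : ℝ) : ℝ := besselI1 (min r ξ) * besselK1 (max r ξ)

/-- terms of the I1 series -/
noncomputable def aI (x : ℝ) (k : ℕ) : ℝ :=
  (x / 2) ^ (2 * k + 1) / ((Nat.factorial k : ℝ) * (Nat.factorial (k + 1) : ℝ))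

/-- terms of the sinh series -/
noncomputable def aS (x : ℝ) (k : ℕ) : ℝ := x ^ (2 * k + 1) / (Nat.factorial (2 * k + 1) : ℝ)

lemma besselI1_eq_tsum (x : ℝ) : besselI1 x = ∑' k, aI x k := rfl

lemma fac_pos_real (k : ℕ) : (0:ℝ) < (Nat.factorial k : ℝ) := by
  exact_mod_cast Nat.factorial_pos k

lemma aI_nonneg {x : ℝ} (hx : 0 ≤ x) (k : ℕ) : 0 ≤ aI x k := by
  apply div_nonneg (pow_nonneg (by linarith) _)
  positivity

lemma aS_nonneg {x : ℝ} (hx : 0 ≤ x) (k : ℕ) : 0 ≤ aS x k := by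
  apply div_nonneg (pow_nonneg hx _); positivity

lemma aI_le {x : ℝ} (hx : 0 ≤ x) (k : ℕ) :
    aI x k ≤ (x/2) * ((x/2)^2) ^ k / (Nat.factorial k : ℝ) := by
  unfold aI
  rw [pow_add, pow_mul, pow_one]
  rw [div_le_div_iff₀ (by positivity) (fac_pos_real k)]
  have h1 : (1:ℝ) ≤ (Nat.factorial (k+1) : ℝ) := by exact_mod_cast Nat.one_le_iff_ne_zero.mpr (Nat.factorial_pos (k+1)).ne'
  have h2 : (0:ℝ) ≤ ((x/2)^2)^k * (x/2) := by positivity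
  nlinarith [fac_pos_real k, mul_nonneg h2 (fac_pos_real k).le]

lemma summable_aI {x : ℝ} (hx : 0 ≤ x) : Summable (aI x) := by
  apply Summable.of_nonneg_of_le (aI_nonneg hx) (aI_le hx)
  have := (Real.summable_pow_div_factorial ((x/2)^2)).mul_left (x/2)
  simpa [mul_div_assoc] using this

lemma summable_aS {x : ℝ} (hx : 0 ≤ x) : Summable (aS x) :=
  (Real.hasSum_sinh x).summable

lemma sinh_eq_tsum' (x : ℝ) : Real.sinh x = ∑' k, aS x k := Real.sinh_eq_tsum x

lemma fact_ineq (k : ℕ) :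
    Nat.factorial (2*k+1) ≤ 2^(2*k+1) * (Nat.factorial k * Nat.factorial (k+1)) := by
  have hle : k ≤ 2*k+1 := by omega
  have h1 : Nat.choose (2*k+1) k * Nat.factorial k * Nat.factorial (k+1) =
      Nat.factorial (2*k+1) := by
    have := Nat.choose_mul_factorial_mul_factorial hle
    simpa [show 2*k+1-k = k+1 by omega] using this
  have h2 : Nat.choose (2*k+1) k ≤ 2^(2*k+1) := by
    calc Nat.choose (2*k+1) k ≤ ∑ i ∈ Finset.range (2*k+2), Nat.choose (2*k+1) i := by
          apply Finset.single_le_sum (f := fun i => Nat.choose (2*k+1) i)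
            (fun i _ => Nat.zero_le _)
          simp; omega
      _ = 2^(2*k+1) := Nat.sum_range_choose (2*k+1)
  calc Nat.factorial (2*k+1) = Nat.choose (2*k+1) k * Nat.factorial k * Nat.factorial (k+1) :=
        h1.symm
    _ ≤ 2^(2*k+1) * Nat.factorial k * Nat.factorial (k+1) := by
        exact Nat.mul_le_mul_right _ (Nat.mul_le_mul_right _ h2)
    _ = 2^(2*k+1) * (Nat.factorial k * Nat.factorial (k+1)) := by ring

lemma aI_le_aS {x : ℝ} (hx : 0 ≤ x) (k : ℕ) : aI x k ≤ aS x k := by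
  unfold aI aS
  rw [div_pow, div_le_div_iff₀ (by positivity) (by positivity)]
  have h : (Nat.factorial (2*k+1) : ℝ) ≤ 2^(2*k+1) * (Nat.factorial k * Nat.factorial (k+1)) := by
    exact_mod_cast fact_ineq k
  have hxp : (0:ℝ) ≤ x ^ (2*k+1) := pow_nonneg hx _
  rw [div_mul_eq_mul_div, div_le_iff₀ (by positivity)]
  push_cast at h ⊢
  nlinarith [mul_le_mul_of_nonneg_left h hxp]

lemma besselI1_le_sinh {x : ℝ} (hx : 0 ≤ x) : besselI1 x ≤ Real.sinh x := by
  rw [besselI1_eq_tsum, sinh_eq_tsum']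
  exact Summable.tsum_le_tsum (aI_le_aS hx) (summable_aI hx) (summable_aS hx)

lemma half_le_besselI1 {x : ℝ} (hx : 0 ≤ x) : x/2 ≤ besselI1 x := by
  have := Summable.le_tsum (summable_aI hx) 0 (fun j _ => aI_nonneg hx j)
  simpa [aI, besselI1] using this

lemma besselI1_pos {x : ℝ} (hx : 0 < x) : 0 < besselI1 x :=
  lt_of_lt_of_le (by linarith) (half_le_besselI1 hx.le)

lemma besselI1_nonneg {x : ℝ} (hx : 0 ≤ x) : 0 ≤ besselI1 x :=
  le_trans (by linarith) (half_le_besselI1 hx)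

lemma exp_le_two_cosh (t : ℝ) : Real.exp t ≤ 2 * Real.cosh t := by
  rw [Real.cosh_eq]; nlinarith [Real.exp_pos (-t)]

lemma cube_le_exp {s : ℝ} (hs : 0 ≤ s) : (s/3)^3 ≤ Real.exp s := by
  have h1 : s/3 ≤ Real.exp (s/3) := by linarith [Real.add_one_le_exp (s/3)]
  have h2 : (s/3)^3 ≤ (Real.exp (s/3))^3 := pow_le_pow_left₀ (by linarith) h1 3
  have h3 : (Real.exp (s/3))^3 = Real.exp s := by
    rw [← Real.exp_nat_mul]; norm_num; ring_nf
  linarith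

lemma K1_integrand_le {x : ℝ} (hx : 0 < x) {t : ℝ} (ht : 0 ≤ t) :
    Real.exp (-x * Real.cosh t) * Real.cosh t ≤ (216 / x^3) * Real.exp (-2*t) := by
  have hc1 : Real.cosh t ≤ Real.exp t := by
    rw [Real.cosh_eq]
    nlinarith [Real.exp_pos (-t), Real.exp_pos t, Real.one_le_exp ht,
      Real.exp_le_one_iff.mpr (by linarith : -t ≤ 0)]
  have hc2 : Real.exp t / 2 ≤ Real.cosh t := by linarith [exp_le_two_cosh t]
  have hs : (0:ℝ) ≤ x/2 * Real.exp t := by positivity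
  have hcube := cube_le_exp hs
  have h3 : Real.exp (-x * Real.cosh t) ≤ Real.exp (-(x/2 * Real.exp t)) := by
    apply Real.exp_le_exp.mpr
    nlinarith
  have h4 : Real.exp (-(x/2 * Real.exp t)) = 1 / Real.exp (x/2 * Real.exp t) := by
    rw [Real.exp_neg]; ring
  have h5 : (x/2 * Real.exp t / 3)^3 = x^3 * (Real.exp t)^3 / 216 := by
    rw [div_pow, mul_pow]; ring
  have hexppos : (0:ℝ) < Real.exp (x/2 * Real.exp t) := Real.exp_pos _
  have h6 : Real.exp (-(x/2 * Real.exp t)) ≤ 216 / (x^3 * (Real.exp t)^3) := by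
    rw [h4, div_le_div_iff₀ hexppos (by positivity)]
    nlinarith [hcube, h5]
  calc Real.exp (-x * Real.cosh t) * Real.cosh t
      ≤ (216 / (x^3 * (Real.exp t)^3)) * Real.exp t := by
        apply mul_le_mul (h3.trans h6) hc1 (by positivity) (by positivity)
    _ = (216 / x^3) * Real.exp (-2*t) := by
        have h7 : (Real.exp t)^3 = Real.exp (3*t) := by rw [← Real.exp_nat_mul]; norm_num
        have h8 : Real.exp t = Real.exp (-2*t) * Real.exp (3*t) := by
          rw [← Real.exp_add]; ring_nf
        rw [h7, h8]
        have h9 : Real.exp (3*t) ≠ 0 := (Real.exp_pos _).ne'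
        field_simp

lemma K1_cont_integrand (x : ℝ) :
    Continuous (fun t : ℝ => Real.exp (-x * Real.cosh t) * Real.cosh t) := by
  continuity

lemma K1_integrable {x : ℝ} (hx : 0 < x) :
    MeasureTheory.IntegrableOn (fun t : ℝ => Real.exp (-x * Real.cosh t) * Real.cosh t)
      (Set.Ioi (0:ℝ)) := by
  apply MeasureTheory.Integrable.mono'
    (((exp_neg_integrableOn_Ioi 0 (by norm_num : (0:ℝ) < 2))).const_mul (216 / x^3))
    ((K1_cont_integrand x).aestronglyMeasurable.restrict)
  filter_upwards [MeasureTheory.ae_restrict_mem measurableSet_Ioi] with t ht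
  rw [Real.norm_eq_abs, abs_of_nonneg (by positivity)]
  exact K1_integrand_le hx (le_of_lt ht)

open MeasureTheory in
lemma besselK1_le_of_le {x y : ℝ} (hx : 0 < x) (hxy : x ≤ y) :
    besselK1 y ≤ Real.exp (x - y) * besselK1 x := by
  have hy : 0 < y := lt_of_lt_of_le hx hxy
  unfold besselK1
  rw [← MeasureTheory.integral_const_mul]
  apply setIntegral_mono_on (K1_integrable hy)
    ((K1_integrable hx).const_mul _) measurableSet_Ioi
  intro t _
  have h1 : (1:ℝ) ≤ Real.cosh t := Real.one_le_cosh t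
  have h2 : Real.exp (-y * Real.cosh t) ≤ Real.exp (x - y) * Real.exp (-x * Real.cosh t) := by
    rw [← Real.exp_add]
    apply Real.exp_le_exp.mpr
    nlinarith
  calc Real.exp (-y * Real.cosh t) * Real.cosh t
      ≤ (Real.exp (x - y) * Real.exp (-x * Real.cosh t)) * Real.cosh t := by
        apply mul_le_mul_of_nonneg_right h2 (by positivity)
    _ = Real.exp (x - y) * (Real.exp (-x * Real.cosh t) * Real.cosh t) := by ring

open MeasureTheory in
lemma exp_le_besselK1 {x : ℝ} (hx : 0 < x) : Real.exp (-x * Real.cosh 1) ≤ besselK1 x := by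
  have hsub : Set.Ioc (0:ℝ) 1 ⊆ Set.Ioi 0 := Set.Ioc_subset_Ioi_self
  have hint : IntegrableOn (fun t : ℝ => Real.exp (-x * Real.cosh t) * Real.cosh t)
      (Set.Ioc (0:ℝ) 1) := (K1_integrable hx).mono_set hsub
  have step1 : Real.exp (-x * Real.cosh 1) * (volume (Set.Ioc (0:ℝ) 1)).toReal ≤
      ∫ t in Set.Ioc (0:ℝ) 1, Real.exp (-x * Real.cosh t) * Real.cosh t := by
    apply setIntegral_ge_of_const_le_real measurableSet_Ioc (by simp)
    · intro t ht
      have h1 : (1:ℝ) ≤ Real.cosh t := Real.one_le_cosh t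
      have h2 : Real.cosh t ≤ Real.cosh 1 := by
        rw [Real.cosh_le_cosh]
        rw [abs_of_nonneg ht.1.le, abs_of_nonneg zero_le_one]
        exact ht.2
      have h3 : Real.exp (-x * Real.cosh 1) ≤ Real.exp (-x * Real.cosh t) := by
        apply Real.exp_le_exp.mpr
        nlinarith
      nlinarith [Real.exp_pos (-x * Real.cosh t)]
    · exact hint
  have step2 : (∫ t in Set.Ioc (0:ℝ) 1, Real.exp (-x * Real.cosh t) * Real.cosh t) ≤ besselK1 x := by
    unfold besselK1
    apply setIntegral_mono_set (K1_integrable hx)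
    · filter_upwards [ae_restrict_mem measurableSet_Ioi] with t _
      positivity
    · exact HasSubset.Subset.eventuallyLE hsub
  have hvol : (volume (Set.Ioc (0:ℝ) 1)).toReal = 1 := by simp
  rw [hvol, mul_one] at step1
  linarith

lemma besselK1_pos {x : ℝ} (hx : 0 < x) : 0 < besselK1 x :=
  lt_of_lt_of_le (Real.exp_pos _) (exp_le_besselK1 hx)

lemma integral_exp_neg_mul {s : ℝ} (hs : 0 < s) :
    ∫ t in (0:ℝ)..1, Real.exp (-s*t) = (1 - Real.exp (-s))/s := by
  have hderiv : ∀ t ∈ Set.uIcc (0:ℝ) 1,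
      HasDerivAt (fun u => -Real.exp (-s*u)/s) (Real.exp (-s*t)) t := by
    intro t _
    have h := (((hasDerivAt_id t).const_mul (-s)).exp).neg.div_const s
    refine h.congr_deriv ?_
    field_simp
    rfl
  rw [intervalIntegral.integral_eq_sub_of_hasDerivAt hderiv
    (Continuous.intervalIntegrable (by continuity) 0 1)]
  simp only [mul_one, mul_zero, Real.exp_zero]
  ring

lemma one_sub_exp_div_antitone {x y : ℝ} (hx : 0 < x) (hxy : x ≤ y) :
    (1 - Real.exp (-y))/y ≤ (1 - Real.exp (-x))/x := by
  have hy : 0 < y := lt_of_lt_of_le hx hxy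
  rw [← integral_exp_neg_mul hx, ← integral_exp_neg_mul hy]
  apply intervalIntegral.integral_mono_on zero_le_one
    (Continuous.intervalIntegrable (by continuity) 0 1)
    (Continuous.intervalIntegrable (by continuity) 0 1)
  intro t ht
  apply Real.exp_le_exp.mpr
  nlinarith [ht.1]

/-- pointwise step-2 inequality: for `b ≥ 1`, `sinh q * exp (-q*b) / q` is antitone. -/
lemma sinh_exp_div_anti {x y b : ℝ} (hx : 0 < x) (hxy : x ≤ y) (hb : 1 ≤ b) :
    Real.sinh y * Real.exp (-y*b) / y ≤ Real.sinh x * Real.exp (-x*b) / x := by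
  have hy : 0 < y := lt_of_lt_of_le hx hxy
  have key : ∀ q : ℝ, 0 < q → Real.sinh q * Real.exp (-q*b) / q
      = ((1 - Real.exp (-(2*q)))/(2*q)) * Real.exp (-q*(b-1)) := by
    intro q hq
    have e1 : Real.exp (-(q*(b-1))) = Real.exp q * Real.exp (-(q*b)) := by
      rw [← Real.exp_add]; congr 1; ring
    have e2 : Real.exp (-(2*q)) * Real.exp q = Real.exp (-q) := by
      rw [← Real.exp_add]; congr 1; ring
    simp only [neg_mul]
    rw [Real.sinh_eq, e1]
    field_simp
    rw [show q*2 = 2*q by ring]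
    linear_combination e2
  rw [key x hx, key y hy]
  have h1 : (1 - Real.exp (-(2*y)))/(2*y) ≤ (1 - Real.exp (-(2*x)))/(2*x) :=
    one_sub_exp_div_antitone (by linarith) (by linarith)
  have h2 : Real.exp (-y*(b-1)) ≤ Real.exp (-x*(b-1)) := by
    apply Real.exp_le_exp.mpr
    nlinarith
  have h3 : ∀ q : ℝ, 0 < q → (0:ℝ) ≤ (1 - Real.exp (-(2*q)))/(2*q) := by
    intro q hq
    have : Real.exp (-(2*q)) ≤ 1 := Real.exp_le_one_iff.mpr (by linarith)
    apply div_nonneg (by linarith) (by linarith)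
  exact mul_le_mul h1 h2 (Real.exp_pos _).le (h3 x hx)

open MeasureTheory in
lemma sinhK1_div_anti {x y : ℝ} (hx : 0 < x) (hxy : x ≤ y) :
    Real.sinh y * besselK1 y / y ≤ Real.sinh x * besselK1 x / x := by
  have hy : 0 < y := lt_of_lt_of_le hx hxy
  have repr : ∀ q : ℝ, 0 < q → Real.sinh q * besselK1 q / q
      = ∫ t in Set.Ioi (0:ℝ), (Real.sinh q / q) * (Real.exp (-q * Real.cosh t) * Real.cosh t) := by
    intro q _
    rw [MeasureTheory.integral_const_mul]
    unfold besselK1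
    ring
  rw [repr x hx, repr y hy]
  apply setIntegral_mono_on ((K1_integrable hy).const_mul _) ((K1_integrable hx).const_mul _)
    measurableSet_Ioi
  intro t _
  have hb : (1:ℝ) ≤ Real.cosh t := Real.one_le_cosh t
  have h := mul_le_mul_of_nonneg_right (sinh_exp_div_anti hx hxy hb)
    (by positivity : (0:ℝ) ≤ Real.cosh t)
  calc Real.sinh y / y * (Real.exp (-y * Real.cosh t) * Real.cosh t)
      = Real.sinh y * Real.exp (-y * Real.cosh t) / y * Real.cosh t := by ring
    _ ≤ Real.sinh x * Real.exp (-x * Real.cosh t) / x * Real.cosh t := h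
    _ = Real.sinh x / x * (Real.exp (-x * Real.cosh t) * Real.cosh t) := by ring

/-- coefficient of I1 series -/
noncomputable def cA (m : ℕ) : ℝ := 1 / (2^(2*m+1) * ((Nat.factorial m : ℝ) * (Nat.factorial (m+1) : ℝ)))
/-- coefficient of sinh series -/
noncomputable def cB (m : ℕ) : ℝ := 1 / (Nat.factorial (2*m+1) : ℝ)

lemma cA_pos (m : ℕ) : 0 < cA m := by
  unfold cA; positivity
lemma cB_pos (m : ℕ) : 0 < cB m := by
  unfold cB; positivity

lemma aI_eq (q : ℝ) (m : ℕ) : aI q m = q^(2*m+1) * cA m := by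
  unfold aI cA
  rw [div_pow]
  field_simp

lemma aS_eq (q : ℝ) (m : ℕ) : aS q m = q^(2*m+1) * cB m := by
  unfold aS cB
  field_simp

lemma nat_coeff_ineq {j k : ℕ} (hjk : j ≤ k) :
    2^(2*j+1) * (Nat.factorial j * Nat.factorial (j+1)) * Nat.factorial (2*k+1) ≤
    2^(2*k+1) * (Nat.factorial k * Nat.factorial (k+1)) * Nat.factorial (2*j+1) := by
  induction k, hjk using Nat.le_induction with
  | base => rfl
  | succ k hjk ih =>
    have e1 : Nat.factorial (2*(k+1)+1) = (2*k+3) * ((2*k+2) * Nat.factorial (2*k+1)) := by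
      rw [show 2*(k+1)+1 = (2*k+2)+1 by ring, Nat.factorial_succ, show 2*k+2 = (2*k+1)+1 by ring,
        Nat.factorial_succ]
    have e2 : Nat.factorial (k+1+1) = (k+2) * Nat.factorial (k+1) := Nat.factorial_succ _
    have e3 : Nat.factorial (k+1) = (k+1) * Nat.factorial k := Nat.factorial_succ _
    have e4 : (2:ℕ)^(2*(k+1)+1) = 4 * 2^(2*k+1) := by
      rw [show 2*(k+1)+1 = (2*k+1)+2 by ring, pow_add]
      ring
    calc 2^(2*j+1) * (Nat.factorial j * Nat.factorial (j+1)) * Nat.factorial (2*(k+1)+1)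
        = (2^(2*j+1) * (Nat.factorial j * Nat.factorial (j+1)) * Nat.factorial (2*k+1))
            * ((2*k+3) * (2*k+2)) := by rw [e1]; ring
      _ ≤ (2^(2*k+1) * (Nat.factorial k * Nat.factorial (k+1)) * Nat.factorial (2*j+1))
            * ((2*k+3) * (2*k+2)) := Nat.mul_le_mul_right _ ih
      _ ≤ (2^(2*k+1) * (Nat.factorial k * Nat.factorial (k+1)) * Nat.factorial (2*j+1))
            * (4 * ((k+1) * (k+2))) := by
            apply Nat.mul_le_mul_left
            nlinarith
      _ = 2^(2*(k+1)+1) * (Nat.factorial (k+1) * Nat.factorial (k+1+1)) * Nat.factorial (2*j+1) := by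
            rw [e2, e4]
            nth_rewrite 2 [e3]
            ring

lemma coeff_ineq {j k : ℕ} (hjk : j ≤ k) : cA k * cB j ≤ cA j * cB k := by
  unfold cA cB
  rw [div_mul_div_comm, div_mul_div_comm, one_mul,
    div_le_div_iff₀ (by positivity) (by positivity)]
  have h := nat_coeff_ineq hjk
  have h' : ((2:ℝ))^(2*j+1) * ((Nat.factorial j : ℝ) * (Nat.factorial (j+1) : ℝ))
      * (Nat.factorial (2*k+1) : ℝ) ≤
      (2:ℝ)^(2*k+1) * ((Nat.factorial k : ℝ) * (Nat.factorial (k+1) : ℝ))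
      * (Nat.factorial (2*j+1) : ℝ) := by exact_mod_cast h
  nlinarith [h']

lemma pow_cross_ineq {x y : ℝ} (hx : 0 ≤ x) (hxy : x ≤ y) {j k : ℕ} (hjk : j ≤ k) :
    y^(2*j+1) * x^(2*k+1) ≤ x^(2*j+1) * y^(2*k+1) := by
  have hy : 0 ≤ y := le_trans hx hxy
  have ex : x^(2*k+1) = x^(2*j+1) * x^(2*(k-j)) := by
    rw [← pow_add]; congr 1; omega
  have ey : y^(2*k+1) = y^(2*j+1) * y^(2*(k-j)) := by
    rw [← pow_add]; congr 1; omega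
  rw [ex, ey]
  have h := pow_le_pow_left₀ hx hxy (2*(k-j))
  calc y^(2*j+1) * (x^(2*j+1) * x^(2*(k-j)))
      ≤ y^(2*j+1) * (x^(2*j+1) * y^(2*(k-j))) := by
        apply mul_le_mul_of_nonneg_left (mul_le_mul_of_nonneg_left h (by positivity))
          (by positivity)
    _ = x^(2*j+1) * (y^(2*j+1) * y^(2*(k-j))) := by ring

lemma pair_ineq_aux {x y : ℝ} (hx : 0 ≤ x) (hxy : x ≤ y) {j k : ℕ} (hjk : j ≤ k) :
    aI y j * aS x k + aI y k * aS x j ≤ aI x j * aS y k + aI x k * aS y j := by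
  simp only [aI_eq, aS_eq]
  have f1 := coeff_ineq hjk
  have f2 := pow_cross_ineq hx hxy hjk
  have hy : 0 ≤ y := le_trans hx hxy
  nlinarith [mul_nonneg (sub_nonneg.mpr f1) (sub_nonneg.mpr f2), cA_pos j, cA_pos k,
    cB_pos j, cB_pos k, pow_nonneg hx (2*j+1), pow_nonneg hx (2*k+1),
    pow_nonneg hy (2*j+1), pow_nonneg hy (2*k+1)]

lemma pair_ineq {x y : ℝ} (hx : 0 ≤ x) (hxy : x ≤ y) (j k : ℕ) :
    aI y j * aS x k + aI y k * aS x j ≤ aI x j * aS y k + aI x k * aS y j := by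
  rcases le_total j k with h | h
  · exact pair_ineq_aux hx hxy h
  · have := pair_ineq_aux hx hxy h
    linarith

lemma summable_norm_aI {x : ℝ} (hx : 0 ≤ x) : Summable (fun k => ‖aI x k‖) :=
  (summable_aI hx).congr (fun k => by rw [Real.norm_eq_abs, abs_of_nonneg (aI_nonneg hx k)])

lemma summable_norm_aS {x : ℝ} (hx : 0 ≤ x) : Summable (fun k => ‖aS x k‖) :=
  (summable_aS hx).congr (fun k => by rw [Real.norm_eq_abs, abs_of_nonneg (aS_nonneg hx k)])

set_option maxHeartbeats 1000000 in
lemma I1_sinh_cross {x y : ℝ} (hx : 0 ≤ x) (hxy : x ≤ y) :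
    besselI1 y * Real.sinh x ≤ besselI1 x * Real.sinh y := by
  have hy : 0 ≤ y := le_trans hx hxy
  have eF : besselI1 y * Real.sinh x = ∑' z : ℕ × ℕ, aI y z.1 * aS x z.2 := by
    rw [besselI1_eq_tsum, sinh_eq_tsum' x]
    exact tsum_mul_tsum_of_summable_norm (summable_norm_aI hy) (summable_norm_aS hx)
  have eG : besselI1 x * Real.sinh y = ∑' z : ℕ × ℕ, aI x z.1 * aS y z.2 := by
    rw [besselI1_eq_tsum, sinh_eq_tsum' y]
    exact tsum_mul_tsum_of_summable_norm (summable_norm_aI hx) (summable_norm_aS hy)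
  rw [eF, eG]
  set e := Equiv.prodComm ℕ ℕ with he
  set F : ℕ × ℕ → ℝ := fun z => aI y z.1 * aS x z.2 with hF
  set G : ℕ × ℕ → ℝ := fun z => aI x z.1 * aS y z.2 with hG
  have hFs : Summable F := (summable_aI hy).mul_of_nonneg (summable_aS hx)
    (fun k => aI_nonneg hy k) (fun k => aS_nonneg hx k)
  have hGs : Summable G := (summable_aI hx).mul_of_nonneg (summable_aS hy)
    (fun k => aI_nonneg hx k) (fun k => aS_nonneg hy k)
  have hFs2 : Summable (fun z => F (e z)) := (Equiv.summable_iff e).mpr hFs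
  have hGs2 : Summable (fun z => G (e z)) := (Equiv.summable_iff e).mpr hGs
  have key : ∀ z : ℕ × ℕ, F z + F (e z) ≤ G z + G (e z) := by
    intro z
    have := pair_ineq hx hxy z.1 z.2
    simpa [hF, hG, he, Equiv.prodComm] using this
  have h1 : ∑' z, (F z + F (e z)) ≤ ∑' z, (G z + G (e z)) :=
    Summable.tsum_le_tsum key (hFs.add hFs2) (hGs.add hGs2)
  have h2 : ∑' z, (F z + F (e z)) = (∑' z, F z) + ∑' z, F (e z) := Summable.tsum_add hFs hFs2
  have h3 : ∑' z, (G z + G (e z)) = (∑' z, G z) + ∑' z, G (e z) := Summable.tsum_add hGs hGs2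
  have h4 : ∑' z, F (e z) = ∑' z, F z := e.tsum_eq F
  have h5 : ∑' z, G (e z) = ∑' z, G z := e.tsum_eq G
  linarith

lemma phi_lt {x y : ℝ} (hx : 0 < x) (hxy : x < y) :
    besselI1 y * besselK1 y / y^2 < besselI1 x * besselK1 x / x^2 := by
  have hy : 0 < y := hx.trans hxy
  have hsx : 0 < Real.sinh x := Real.sinh_pos_iff.mpr hx
  have hsy : 0 < Real.sinh y := Real.sinh_pos_iff.mpr hy
  have hKx : 0 < besselK1 x := besselK1_pos hx
  have hKy : 0 < besselK1 y := besselK1_pos hy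
  have hIx : 0 < besselI1 x := besselI1_pos hx
  have hIy : 0 < besselI1 y := besselI1_pos hy
  have c1 : besselI1 y * Real.sinh x ≤ besselI1 x * Real.sinh y :=
    I1_sinh_cross hx.le hxy.le
  have c2 : Real.sinh y * besselK1 y / y ≤ Real.sinh x * besselK1 x / x :=
    sinhK1_div_anti hx hxy.le
  have c2' : Real.sinh y * besselK1 y * x ≤ Real.sinh x * besselK1 x * y := by
    rw [div_le_div_iff₀ hy hx] at c2
    linarith
  have d1 : besselI1 y * Real.sinh x * (besselK1 y * x) ≤
      besselI1 x * Real.sinh y * (besselK1 y * x) := by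
    apply mul_le_mul_of_nonneg_right c1 (by positivity)
  have d2 : besselI1 x * (Real.sinh y * besselK1 y * x) ≤
      besselI1 x * (Real.sinh x * besselK1 x * y) := by
    apply mul_le_mul_of_nonneg_left c2' (by positivity)
  have P : besselI1 y * besselK1 y * x ≤ besselI1 x * besselK1 x * y := by
    have h := le_trans (by linarith : besselI1 y * besselK1 y * x * Real.sinh x ≤
      besselI1 x * (Real.sinh y * besselK1 y * x)) d2
    nlinarith
  rw [div_lt_div_iff₀ (by positivity) (by positivity)]
  have h1 := mul_le_mul_of_nonneg_right P hx.le
  have h2 := mul_lt_mul_of_pos_left hxy (by positivity : (0:ℝ) < besselI1 x * besselK1 x * y)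
  nlinarith [h1, h2]

lemma aI_mono {k : ℕ} {u v : ℝ} (hu : 0 ≤ u) (huv : u ≤ v) : aI u k ≤ aI v k := by
  unfold aI
  rw [div_le_div_iff₀ (by positivity) (by positivity)]
  have h := pow_le_pow_left₀ (by linarith : (0:ℝ) ≤ u/2) (by linarith : u/2 ≤ v/2) (2*k+1)
  nlinarith [pow_nonneg (by linarith : (0:ℝ) ≤ u/2) (2*k+1), fac_pos_real k, fac_pos_real (k+1),
    mul_pos (fac_pos_real k) (fac_pos_real (k+1))]

lemma besselI1_continuousOn {R : ℝ} (hR : 0 < R) :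
    ContinuousOn besselI1 (Set.Icc 0 R) := by
  set c : ℝ → ℝ := fun x => max 0 (min x R) with hc
  have hcc : Continuous c := continuous_const.max (continuous_id.min continuous_const)
  have hmem : ∀ x, 0 ≤ c x ∧ c x ≤ R := by
    intro x
    constructor
    · exact le_max_left _ _
    · exact max_le hR.le (min_le_right _ _)
  have hcont : Continuous (fun x => ∑' k, aI (c x) k) := by
    apply continuous_tsum (u := fun k => (R/2) * ((R/2)^2)^k / (Nat.factorial k : ℝ))
    · intro k
      unfold aI
      exact (((hcc.div_const 2).pow _).div_const _)
    · have := (Real.summable_pow_div_factorial ((R/2)^2)).mul_left (R/2)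
      simpa [mul_div_assoc] using this
    · intro k x
      rw [Real.norm_eq_abs, abs_of_nonneg (aI_nonneg (hmem x).1 k)]
      exact le_trans (aI_mono (hmem x).1 (hmem x).2) (aI_le hR.le k)
  apply ContinuousOn.congr (hcont.continuousOn)
  intro x hx
  rw [besselI1_eq_tsum]
  congr 1
  rw [hc]
  simp only
  rw [min_eq_left hx.2, max_eq_right hx.1]

open MeasureTheory in
lemma besselK1_continuousAt {x₀ : ℝ} (hx : 0 < x₀) : ContinuousAt besselK1 x₀ := by
  unfold besselK1
  apply continuousAt_of_dominated (bound := fun t => (216/(x₀/2)^3) * Real.exp (-2*t))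
  · exact Eventually.of_forall (fun x => (K1_cont_integrand x).aestronglyMeasurable.restrict)
  · have hball : Metric.ball x₀ (x₀/2) ∈ nhds x₀ := Metric.ball_mem_nhds _ (by linarith)
    filter_upwards [hball] with x hxball
    have hx2 : x₀/2 < x := by
      rw [Metric.mem_ball, Real.dist_eq, abs_lt] at hxball
      linarith
    filter_upwards [ae_restrict_mem measurableSet_Ioi] with t ht
    rw [Real.norm_eq_abs, abs_of_nonneg (by positivity)]
    calc Real.exp (-x * Real.cosh t) * Real.cosh t
        ≤ Real.exp (-(x₀/2) * Real.cosh t) * Real.cosh t := by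
          apply mul_le_mul_of_nonneg_right _ (by positivity)
          apply Real.exp_le_exp.mpr
          nlinarith [Real.one_le_cosh t]
      _ ≤ (216/(x₀/2)^3) * Real.exp (-2*t) := K1_integrand_le (by linarith) ht.le
  · exact (exp_neg_integrableOn_Ioi 0 (by norm_num : (0:ℝ) < 2)).const_mul _
  · apply Eventually.of_forall
    intro t
    apply Continuous.continuousAt
    continuity

noncomputable def phiG (q : ℝ) : ℝ := Gdiag q / q^2

lemma phiG_lt {x y : ℝ} (hx : 0 < x) (hxy : x < y) : phiG y < phiG x := phi_lt hx hxy

lemma Gdiag_pos {z : ℝ} (hz : 0 < z) : 0 < Gdiag z :=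
  mul_pos (besselI1_pos hz) (besselK1_pos hz)

lemma phiG_continuousOn {a b : ℝ} (ha : 0 < a) : ContinuousOn phiG (Set.Icc a b) := by
  rcases le_or_gt a b with hab | hab
  · have hb : 0 < b := lt_of_lt_of_le ha hab
    have hsub : Set.Icc a b ⊆ Set.Icc 0 b := Set.Icc_subset_Icc (by linarith) le_rfl
    have hI : ContinuousOn besselI1 (Set.Icc a b) :=
      (besselI1_continuousOn hb).mono hsub
    have hK : ContinuousOn besselK1 (Set.Icc a b) := by
      intro z hz
      exact (besselK1_continuousAt (lt_of_lt_of_le ha hz.1)).continuousWithinAt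
    apply ContinuousOn.div (hI.mul hK) ((continuous_pow 2).continuousOn)
    intro z hz
    have : 0 < z := lt_of_lt_of_le ha hz.1
    positivity
  · rw [Set.Icc_eq_empty (by linarith)]
    exact continuousOn_empty _

lemma phiG_lower {q : ℝ} (hq : 0 < q) (hq1 : q ≤ 1) :
    Real.exp (-Real.cosh 1) / (2*q) ≤ phiG q := by
  have hK : 0 < besselK1 q := besselK1_pos hq
  have hI : q/2 ≤ besselI1 q := half_le_besselI1 hq.le
  have hKb : Real.exp (-q * Real.cosh 1) ≤ besselK1 q := exp_le_besselK1 hq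
  have hc1 : (1:ℝ) ≤ Real.cosh 1 := Real.one_le_cosh 1
  have h1 : Real.exp (-Real.cosh 1) ≤ Real.exp (-q * Real.cosh 1) := by
    apply Real.exp_le_exp.mpr
    nlinarith
  have h2 : (q/2) * Real.exp (-Real.cosh 1) ≤ besselI1 q * besselK1 q := by
    apply mul_le_mul hI (h1.trans hKb) (Real.exp_pos _).le (besselI1_nonneg hq.le)
  unfold phiG Gdiag
  rw [div_le_div_iff₀ (by positivity) (by positivity)]
  nlinarith [Real.exp_pos (-Real.cosh 1)]

lemma phiG_upper {q : ℝ} (hq : 1 ≤ q) :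
    phiG q ≤ (Real.exp 1 / 2) * besselK1 1 / q^2 := by
  have hq0 : 0 < q := lt_of_lt_of_le zero_lt_one hq
  have hsinh : Real.sinh q ≤ Real.exp q / 2 := by
    rw [Real.sinh_eq]
    have := Real.exp_pos (-q)
    linarith
  have hI : besselI1 q ≤ Real.exp q / 2 := (besselI1_le_sinh hq0.le).trans hsinh
  have hK : besselK1 q ≤ Real.exp (1 - q) * besselK1 1 := besselK1_le_of_le zero_lt_one hq
  have hKpos : 0 < besselK1 q := besselK1_pos hq0
  have hK1pos : 0 < besselK1 1 := besselK1_pos zero_lt_one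
  unfold phiG Gdiag
  apply div_le_div_of_nonneg_right ?_ (by positivity)
  have hexp : Real.exp q * Real.exp (1-q) = Real.exp 1 := by
    rw [← Real.exp_add]; ring_nf
  calc besselI1 q * besselK1 q
      ≤ (Real.exp q/2) * (Real.exp (1-q) * besselK1 1) :=
        mul_le_mul hI hK hKpos.le (by positivity)
    _ = (Real.exp 1/2) * besselK1 1 := by
        field_simp
        linear_combination hexp

lemma exists_phiG_eq {c : ℝ} (hc : 0 < c) : ∃ qs : ℝ, 0 < qs ∧ phiG qs = c := by
  set q₀ : ℝ := min 1 (Real.exp (-Real.cosh 1)/(2*c)) with hq₀def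
  have hq₀pos : 0 < q₀ := lt_min zero_lt_one (by positivity)
  have hq₀le1 : q₀ ≤ 1 := min_le_left _ _
  have hq₀le2 : q₀ ≤ Real.exp (-Real.cosh 1)/(2*c) := min_le_right _ _
  clear_value q₀
  have hlow : c ≤ phiG q₀ := by
    have h1 := phiG_lower hq₀pos hq₀le1
    have h2 : q₀ ≤ Real.exp (-Real.cosh 1)/(2*c) := hq₀le2
    have h3 : c ≤ Real.exp (-Real.cosh 1)/(2*q₀) := by
      rw [le_div_iff₀ (by positivity)]
      have h4 : (2*c) * q₀ ≤ (2*c) * (Real.exp (-Real.cosh 1)/(2*c)) :=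
        mul_le_mul_of_nonneg_left h2 (by positivity)
      have h5 : (2*c) * (Real.exp (-Real.cosh 1)/(2*c)) = Real.exp (-Real.cosh 1) := by
        field_simp
      nlinarith
    linarith
  set X : ℝ := (Real.exp 1 / 2) * besselK1 1 / c with hXdef
  have hXpos : 0 < X := by
    have := besselK1_pos (zero_lt_one : (0:ℝ) < 1)
    positivity
  have hXc : X * c = Real.exp 1/2 * besselK1 1 := by
    rw [hXdef]; field_simp
  clear_value X
  set q₁ : ℝ := max (max 1 q₀) (Real.sqrt X) + 1 with hq₁def
  have hq₁1 : 1 ≤ q₁ := by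
    have h : (1:ℝ) ≤ max (max 1 q₀) (Real.sqrt X) := le_trans (le_max_left 1 q₀) (le_max_left _ _)
    rw [hq₁def]; linarith
  have hq₀le3 : q₀ ≤ q₁ := by
    have h : q₀ ≤ max (max 1 q₀) (Real.sqrt X) := le_trans (le_max_right 1 q₀) (le_max_left _ _)
    rw [hq₁def]; linarith
  have hsqle : Real.sqrt X < q₁ := by
    have h : Real.sqrt X ≤ max (max 1 q₀) (Real.sqrt X) := le_max_right _ _
    rw [hq₁def]; linarith
  clear_value q₁
  have hq₀q₁ : q₀ ≤ q₁ := hq₀le3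
  have hsq : X < q₁^2 := by
    have h1 : Real.sqrt X < q₁ := hsqle
    calc X = Real.sqrt X ^ 2 := (Real.sq_sqrt hXpos.le).symm
      _ < q₁^2 := by nlinarith [Real.sqrt_nonneg X]
  have hhigh : phiG q₁ ≤ c := by
    have h1 := phiG_upper hq₁1
    have h2 : (Real.exp 1 / 2) * besselK1 1 / q₁^2 < c := by
      rw [div_lt_iff₀ (by positivity)]
      have hfin : X * c < q₁^2 * c := mul_lt_mul_of_pos_right hsq hc
      nlinarith [hfin, hXc]
    linarith
  have hIcc : c ∈ Set.Icc (phiG q₁) (phiG q₀) := ⟨hhigh, hlow⟩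
  have := intermediate_value_Icc' hq₀q₁ (phiG_continuousOn hq₀pos)
  obtain ⟨qs, hqsmem, hqs⟩ := this hIcc
  exact ⟨qs, lt_of_lt_of_le hq₀pos hqsmem.1, hqs⟩

/-- for M, H > 0 there is a unique q_* > 0 with
q_* = M √(G(q_*)/H), and along any evolution conserving
H = (p² + M²/q²) G(q,q) one has q(t) ≥ q_*. -/
theorem rotating_peakon_minimal_radius (M H : ℝ) (hM : 0 < M) (hH : 0 < H)
    (q p : ℝ → ℝ) (hqpos : ∀ t, 0 < q t)
    (hcons : ∀ t, (p t ^ 2 + M ^ 2 / (q t) ^ 2) * Gdiag (q t) = H) :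
    ∃ qs : ℝ, 0 < qs ∧ qs = M * Real.sqrt (Gdiag qs / H) ∧
      (∀ qs' : ℝ, 0 < qs' → qs' = M * Real.sqrt (Gdiag qs' / H) → qs' = qs) ∧
      ∀ t, qs ≤ q t := by
  have hc : (0:ℝ) < H / M^2 := by positivity
  obtain ⟨qs, hqs, hphi⟩ := exists_phiG_eq hc
  have hGqs : Gdiag qs = (H/M^2) * qs^2 := by
    have h := hphi
    unfold phiG at h
    field_simp at h ⊢
    linarith
  refine ⟨qs, hqs, ?_, ?_, ?_⟩
  · rw [hGqs, show H/M^2 * qs^2 / H = (qs/M)^2 by field_simp,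
      Real.sqrt_sq (by positivity)]
    field_simp
  · intro qs' hqs' heq
    have hGpos' : 0 < Gdiag qs' := Gdiag_pos hqs'
    have h1 : qs'^2 = M^2 * (Gdiag qs' / H) := by
      conv_lhs => rw [heq]
      rw [mul_pow, Real.sq_sqrt (by positivity)]
    have h2 : phiG qs' = H/M^2 := by
      unfold phiG
      rw [h1]
      rw [div_eq_div_iff (by positivity) (by positivity)]
      field_simp
    rcases lt_trichotomy qs' qs with h | h | h
    · exfalso
      have := phiG_lt hqs' h
      rw [hphi, h2] at this
      exact lt_irrefl _ this
    · exact h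
    · exfalso
      have := phiG_lt hqs h
      rw [hphi, h2] at this
      exact lt_irrefl _ this
  · intro t
    by_contra hlt
    push_neg at hlt
    have hqt := hqpos t
    have hG := Gdiag_pos hqt
    have h := hcons t
    have hle : M^2 / (q t)^2 * Gdiag (q t) ≤ H := by
      nlinarith [sq_nonneg (p t), hG]
    have hphile : phiG (q t) ≤ H / M^2 := by
      unfold phiG
      rw [div_le_div_iff₀ (by positivity) (by positivity)]
      rw [div_mul_eq_mul_div, div_le_iff₀ (by positivity)] at hle
      nlinarith
    have hstrict := phiG_lt hqt hlt
    rw [hphi] at hstrict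
    linarith
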